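/- For every n ∈ ℕ₀ and t ≥ 0, p̂(n,t) = Σ_{(n₁,…,n_k)∈Ω(k,n)} (Π_{j=1}^k λ_j^{n_j}/n_j!) · Σ_{r₁+⋯+r_{k₀}=z_k} z_k! · Π_{j₀=1}^{k₀} (j₀^{r_{j₀}}/r_{j₀}!) e^{−μ_{j₀} t (1−e^{−j₀λ})} 𝓑_{r_{j₀}}(e^{−j₀λ} μ_{j₀} t), where z_k = n₁+⋯+n_k and the inner sum ranges over all (r₁,…,r_{k₀}) ∈ ℕ₀^{k₀} with r₁+⋯+r_{k₀} = z_k. -/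
import Mathlib


/-- GCP state probabilities: `p(n,t) = ∑_{Ω(k,n)} ∏_j ((λ_j t)^{x_j}/x_j!) e^{−λ_j t}`,
where index `j : Fin k` encodes jump size `j+1`. -/
noncomputable def gcpPmf (k : ℕ) (lam : Fin k → ℝ) (n : ℕ) (t : ℝ) : ℝ :=
  ∑' x : Fin k → ℕ,
    if (∑ j : Fin k, ((j : ℕ) + 1) * x j) = n then
      ∏ j : Fin k, (lam j * t) ^ (x j) / (Nat.factorial (x j)) * Real.exp (-(lam j * t))
    else 0

/-- IGCP state probabilities: `p̂(n,t) = ∑_{s=0}^∞ p(n,s) p₀(s,t)`. -/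
noncomputable def igcpPmf (k : ℕ) (lam : Fin k → ℝ) (k0 : ℕ) (mu : Fin k0 → ℝ)
    (n : ℕ) (t : ℝ) : ℝ :=
  ∑' s : ℕ, gcpPmf k lam n s * gcpPmf k0 mu s t

/-- The `n`-th order Bell polynomial `𝓑_n(x) = e^{−x} ∑_{r=0}^∞ r^n x^r / r!`. -/
noncomputable def bellPoly (n : ℕ) (x : ℝ) : ℝ :=
  Real.exp (-x) * ∑' r : ℕ, (r : ℝ) ^ n * x ^ r / (Nat.factorial r)

open scoped ENNReal

section Aux

lemma tsum_eq_toReal_tsum_ofReal {ι : Type*} (f : ι → ℝ) (hf : ∀ i, 0 ≤ f i) :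
    ∑' i, f i = (∑' i, ENNReal.ofReal (f i)).toReal := by
  by_cases h : Summable f
  · rw [← ENNReal.ofReal_tsum_of_nonneg hf h, ENNReal.toReal_ofReal (tsum_nonneg hf)]
  · rw [tsum_eq_zero_of_not_summable h]
    have h2 : ∑' i, ENNReal.ofReal (f i) = ∞ := by
      by_contra hne
      exact h (by simpa [ENNReal.toReal_ofReal, hf] using
        (ENNReal.summable_toReal hne).congr (fun i => ENNReal.toReal_ofReal (hf i)))
    simp [h2]

lemma ennreal_tsum_pi_prod : ∀ (N : ℕ) (g : Fin N → ℕ → ℝ≥0∞),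
    ∑' y : Fin N → ℕ, ∏ j, g j (y j) = ∏ j, ∑' m, g j m := by
  intro N
  induction N with
  | zero =>
      intro g
      simp only [Finset.univ_eq_empty, Finset.prod_empty]
      rw [tsum_eq_single (fun i => Fin.elim0 i)]
      intro b hb
      exact absurd (funext fun i => Fin.elim0 i) (Ne.symm hb)
  | succ N ih =>
    intro g
    rw [← (Fin.consEquiv (fun _ : Fin (N+1) => ℕ)).tsum_eq]
    simp only [Fin.consEquiv_apply]
    rw [ENNReal.tsum_prod']
    simp only [Fin.prod_univ_succ, Fin.cons_zero, Fin.cons_succ]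
    calc ∑' (a : ℕ) (b : Fin N → ℕ), g 0 a * ∏ i : Fin N, g i.succ (b i)
        = ∑' (a : ℕ), g 0 a * ∑' (b : Fin N → ℕ), ∏ i : Fin N, g i.succ (b i) := by
          congr 1; ext a; rw [ENNReal.tsum_mul_left]
      _ = (∑' a, g 0 a) * ∏ i : Fin N, ∑' m, g i.succ m := by
          rw [ENNReal.tsum_mul_right, ih]

lemma bellPoly_nonneg (n : ℕ) (x : ℝ) (hx : 0 ≤ x) : 0 ≤ bellPoly n x := by
  unfold bellPoly
  apply mul_nonneg (le_of_lt (Real.exp_pos _))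
  exact tsum_nonneg (fun r => by positivity)

lemma bell_summable (ρ : ℕ) (q : ℝ) (hq : 0 ≤ q) :
    Summable (fun m : ℕ => (m : ℝ) ^ ρ * q ^ m / (Nat.factorial m)) := by
  have h : Summable (fun m : ℕ => (Nat.factorial ρ : ℝ) * ((Real.exp 1 * q) ^ m / (Nat.factorial m))) :=
    (Real.summable_pow_div_factorial (Real.exp 1 * q)).mul_left _
  refine h.of_nonneg_of_le (fun m => by positivity) (fun m => ?_)
  have h1 : (m : ℝ) ^ ρ ≤ (Nat.factorial ρ : ℝ) * Real.exp m := by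
    have := Real.pow_div_factorial_le_exp (x := (m : ℝ)) (Nat.cast_nonneg m) ρ
    rw [div_le_iff₀ (by positivity)] at this
    linarith [this]
  calc (m : ℝ) ^ ρ * q ^ m / (Nat.factorial m)
      ≤ (Nat.factorial ρ : ℝ) * Real.exp m * q ^ m / (Nat.factorial m) := by
        apply div_le_div_of_nonneg_right ?_ ?_ |>.trans_eq rfl
        · exact mul_le_mul_of_nonneg_right h1 (by positivity)
        · positivity
    _ = (Nat.factorial ρ : ℝ) * ((Real.exp 1 * q) ^ m / (Nat.factorial m)) := by
        rw [mul_pow, ← Real.exp_nat_mul]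
        ring

lemma bell_tsum (ρ : ℕ) (q : ℝ) :
    ∑' m : ℕ, (m : ℝ) ^ ρ * q ^ m / (Nat.factorial m) = Real.exp q * bellPoly ρ q := by
  unfold bellPoly
  rw [← mul_assoc, ← Real.exp_add]
  simp

lemma constr_mem {N : ℕ} {x : Fin N → ℕ} {n : ℕ} (h : (∑ j : Fin N, ((j : ℕ) + 1) * x j) = n) :
    ∀ j, x j ∈ Finset.range (n + 1) := by
  intro j
  rw [Finset.mem_range, Nat.lt_succ_iff, ← h]
  calc x j ≤ ((j : ℕ) + 1) * x j := Nat.le_mul_of_pos_left _ (Nat.succ_pos _)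
    _ ≤ _ := Finset.single_le_sum (f := fun i : Fin N => ((i : ℕ) + 1) * x i)
      (fun _ _ => Nat.zero_le _) (Finset.mem_univ j)

lemma constr_summable {N : ℕ} {n : ℕ} (f : (Fin N → ℕ) → ℝ)
    (hf : ∀ x, (∑ j : Fin N, ((j : ℕ) + 1) * x j) ≠ n → f x = 0) : Summable f := by
  apply summable_of_ne_finset_zero (s := Fintype.piFinset (fun _ => Finset.range (n + 1)))
  intro x hx
  apply hf
  intro h
  exact hx (Fintype.mem_piFinset.2 (constr_mem h))

lemma gcp_term_nonneg {N : ℕ} (c : Fin N → ℝ) (hc : ∀ j, 0 ≤ c j) (t : ℝ) (ht : 0 ≤ t)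
    (x : Fin N → ℕ) (n : ℕ) :
    0 ≤ (if (∑ j : Fin N, ((j : ℕ) + 1) * x j) = n then
      ∏ j : Fin N, (c j * t) ^ (x j) / (Nat.factorial (x j)) * Real.exp (-(c j * t))
    else 0) := by
  split
  · apply Finset.prod_nonneg; intro j _
    have := hc j
    positivity
  · exact le_refl 0

lemma gcpPmf_nonneg {N : ℕ} (c : Fin N → ℝ) (hc : ∀ j, 0 ≤ c j) (n : ℕ) (t : ℝ) (ht : 0 ≤ t) :
    0 ≤ gcpPmf N c n t :=
  tsum_nonneg (fun x => gcp_term_nonneg c hc t ht x n)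

lemma ofReal_gcpPmf {N : ℕ} (c : Fin N → ℝ) (hc : ∀ j, 0 ≤ c j) (n : ℕ) (t : ℝ) (ht : 0 ≤ t) :
    ENNReal.ofReal (gcpPmf N c n t)
      = ∑' x : Fin N → ℕ,
          if (∑ j : Fin N, ((j : ℕ) + 1) * x j) = n then
            ∏ j : Fin N, ENNReal.ofReal ((c j * t) ^ (x j) / (Nat.factorial (x j)) * Real.exp (-(c j * t)))
          else 0 := by
  unfold gcpPmf
  rw [ENNReal.ofReal_tsum_of_nonneg (fun x => gcp_term_nonneg c hc t ht x n)
    (constr_summable _ (fun x hx => by rw [if_neg hx]))]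
  apply tsum_congr
  intro x
  split
  · rw [ENNReal.ofReal_prod_of_nonneg]
    intro j _
    have := hc j
    positivity
  · exact ENNReal.ofReal_zero

lemma step_e (a : ℝ) (ha : 0 ≤ a) (ρ : ℕ) (q : ℝ) (hq : 0 ≤ q) (c : ℝ) (hc : 0 ≤ c) :
    ∑' m : ℕ, ENNReal.ofReal (a ^ ρ * (m : ℝ) ^ ρ / (Nat.factorial ρ) * (q ^ m / (Nat.factorial m)) * c)
      = ENNReal.ofReal (a ^ ρ / (Nat.factorial ρ) * c * (Real.exp q * bellPoly ρ q)) := by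
  have hsum : Summable (fun m : ℕ => a ^ ρ * (m : ℝ) ^ ρ / (Nat.factorial ρ) * (q ^ m / (Nat.factorial m)) * c) := by
    apply ((bell_summable ρ q hq).mul_left (a ^ ρ / (Nat.factorial ρ) * c)).congr
    intro m; ring
  have hval : ∑' m : ℕ, a ^ ρ * (m : ℝ) ^ ρ / (Nat.factorial ρ) * (q ^ m / (Nat.factorial m)) * c
      = a ^ ρ / (Nat.factorial ρ) * c * (Real.exp q * bellPoly ρ q) := by
    rw [← bell_tsum, ← tsum_mul_left]
    apply tsum_congr; intro m; ring
  rw [← hval]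
  refine (ENNReal.ofReal_tsum_of_nonneg (fun m => by positivity) hsum).symm

lemma step_c (k0 : ℕ) (mu : Fin k0 → ℝ) (t : ℝ) (L : ℝ) (z : ℕ) (y : Fin k0 → ℕ) :
    ((∑ j0 : Fin k0, ((j0 : ℕ) + 1) * y j0 : ℕ) : ℝ) ^ z *
        Real.exp (-(L * ((∑ j0 : Fin k0, ((j0 : ℕ) + 1) * y j0 : ℕ) : ℝ))) *
        ∏ j0 : Fin k0, ((mu j0 * t) ^ (y j0) / (Nat.factorial (y j0)) * Real.exp (-(mu j0 * t)))
      = ∑ r ∈ Finset.piAntidiag Finset.univ z,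
          (Nat.factorial z : ℝ) *
            ∏ j0 : Fin k0,
              ((j0 : ℕ) + 1 : ℝ) ^ (r j0) * (y j0 : ℝ) ^ (r j0) / (Nat.factorial (r j0)) *
                ((Real.exp (-(((j0 : ℕ) + 1 : ℝ) * L)) * mu j0 * t) ^ (y j0) / (Nat.factorial (y j0))) *
                Real.exp (-(mu j0 * t)) := by
  have hcast : ((∑ j0 : Fin k0, ((j0 : ℕ) + 1) * y j0 : ℕ) : ℝ)
      = ∑ j0 : Fin k0, (((j0 : ℕ) + 1 : ℝ) * (y j0 : ℝ)) := by push_cast; rfl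
  have hexp : Real.exp (-(L * ∑ j0 : Fin k0, (((j0 : ℕ) + 1 : ℝ) * (y j0 : ℝ))))
      = ∏ j0 : Fin k0, (Real.exp (-(((j0 : ℕ) + 1 : ℝ) * L))) ^ (y j0) := by
    rw [Finset.mul_sum, ← neg_one_mul, Finset.mul_sum, Real.exp_sum]
    apply Finset.prod_congr rfl
    intro j0 _
    rw [← Real.exp_nat_mul]
    congr 1
    ring
  rw [hcast, hexp, Finset.sum_pow_eq_sum_piAntidiag, Finset.sum_mul, Finset.sum_mul]
  apply Finset.sum_congr rfl
  intro r hr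
  obtain ⟨hrz, -⟩ := Finset.mem_piAntidiag.1 hr
  have hfacpos : (0:ℝ) < ∏ j0 : Fin k0, ((Nat.factorial (r j0) : ℝ)) := by
    apply Finset.prod_pos; intro j0 _; exact_mod_cast Nat.factorial_pos _
  have hmult : (Nat.multinomial Finset.univ r : ℝ)
      = (Nat.factorial z : ℝ) / ∏ j0 : Fin k0, ((Nat.factorial (r j0)) : ℝ) := by
    rw [eq_div_iff (ne_of_gt hfacpos), mul_comm]
    rw_mod_cast [Nat.multinomial_spec]
    rw [hrz]
  rw [hmult]
  rw [eq_comm]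
  calc (Nat.factorial z : ℝ) *
            ∏ j0 : Fin k0,
              ((j0 : ℕ) + 1 : ℝ) ^ (r j0) * (y j0 : ℝ) ^ (r j0) / (Nat.factorial (r j0)) *
                ((Real.exp (-(((j0 : ℕ) + 1 : ℝ) * L)) * mu j0 * t) ^ (y j0) / (Nat.factorial (y j0))) *
                Real.exp (-(mu j0 * t))
      = (Nat.factorial z : ℝ) *
          ((∏ j0 : Fin k0, ((((j0 : ℕ) + 1 : ℝ) * (y j0 : ℝ)) ^ (r j0) *
              ((mu j0 * t) ^ (y j0) / (Nat.factorial (y j0)) * Real.exp (-(mu j0 * t))) *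
              (Real.exp (-(((j0 : ℕ) + 1 : ℝ) * L))) ^ (y j0))) /
            ∏ j0 : Fin k0, ((Nat.factorial (r j0)) : ℝ)) := by
        rw [← Finset.prod_div_distrib]
        congr 1
        apply Finset.prod_congr rfl
        intro j0 _
        rw [mul_pow, mul_pow, mul_pow]
        ring
    _ = (Nat.factorial z : ℝ) / (∏ j0 : Fin k0, ((Nat.factorial (r j0)) : ℝ)) *
          (∏ j0 : Fin k0, (((j0 : ℕ) + 1 : ℝ) * (y j0 : ℝ)) ^ (r j0)) *
          (∏ j0 : Fin k0, ((mu j0 * t) ^ (y j0) / (Nat.factorial (y j0)) * Real.exp (-(mu j0 * t)))) *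
          (∏ j0 : Fin k0, (Real.exp (-(((j0 : ℕ) + 1 : ℝ) * L))) ^ (y j0)) := by
        rw [Finset.prod_mul_distrib, Finset.prod_mul_distrib]
        ring
    _ = _ := by ring

lemma W_eval (k0 : ℕ) (mu : Fin k0 → ℝ) (hmu : ∀ j0, 0 < mu j0) (t : ℝ) (ht : 0 ≤ t)
    (L : ℝ) (hL : 0 ≤ L) (z : ℕ) :
    ∑' s : ℕ, ENNReal.ofReal ((s : ℝ) ^ z * Real.exp (-(L * s))) * ENNReal.ofReal (gcpPmf k0 mu s t)
      = ENNReal.ofReal (∑' r : Fin k0 → ℕ,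
          if (∑ j0 : Fin k0, r j0) = z then
            (Nat.factorial z : ℝ) *
              ∏ j0 : Fin k0,
                (((j0 : ℕ) + 1 : ℝ) ^ (r j0) / (Nat.factorial (r j0))) *
                  Real.exp (-(mu j0 * t * (1 - Real.exp (-(((j0 : ℕ) + 1 : ℝ) * L))))) *
                  bellPoly (r j0)
                    (Real.exp (-(((j0 : ℕ) + 1 : ℝ) * L)) * mu j0 * t)
          else 0) := by
  classical
  have hmu' : ∀ j0, (0:ℝ) ≤ mu j0 := fun j0 => (hmu j0).le
  set E : Fin k0 → ℝ := fun j0 => Real.exp (-(((j0 : ℕ) + 1 : ℝ) * L)) with hE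
  -- the per-index summand after multinomial expansion
  set h : Fin k0 → ℕ → ℕ → ℝ := fun j0 ρ m =>
    ((j0 : ℕ) + 1 : ℝ) ^ ρ * (m : ℝ) ^ ρ / (Nat.factorial ρ) *
      ((E j0 * mu j0 * t) ^ m / (Nat.factorial m)) * Real.exp (-(mu j0 * t)) with hh
  -- the target per-index factor
  set F : Fin k0 → ℕ → ℝ := fun j0 ρ =>
    (((j0 : ℕ) + 1 : ℝ) ^ ρ / (Nat.factorial ρ)) *
      Real.exp (-(mu j0 * t * (1 - Real.exp (-(((j0 : ℕ) + 1 : ℝ) * L))))) *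
      bellPoly ρ (Real.exp (-(((j0 : ℕ) + 1 : ℝ) * L)) * mu j0 * t) with hF
  have hEnn : ∀ j0, (0:ℝ) ≤ E j0 := fun j0 => (Real.exp_pos _).le
  have hhnn : ∀ j0 ρ m, 0 ≤ h j0 ρ m := by
    intro j0 ρ m
    have h1 := hEnn j0
    have h2 := hmu' j0
    simp only [hh]
    positivity
  have hFnn : ∀ j0 ρ, 0 ≤ F j0 ρ := by
    intro j0 ρ
    have h2 := hmu' j0
    have hb : 0 ≤ bellPoly ρ (Real.exp (-(((j0 : ℕ) + 1 : ℝ) * L)) * mu j0 * t) :=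
      bellPoly_nonneg _ _ (by positivity)
    simp only [hF]
    positivity
  -- evaluate the single sums
  have hsingle : ∀ j0 ρ, ∑' m : ℕ, ENNReal.ofReal (h j0 ρ m) = ENNReal.ofReal (F j0 ρ) := by
    intro j0 ρ
    have h2 := hmu' j0
    rw [hh]
    simp only
    rw [step_e (((j0 : ℕ) + 1 : ℝ)) (by positivity) ρ (E j0 * mu j0 * t) (by
        have := hEnn j0; positivity) (Real.exp (-(mu j0 * t))) (Real.exp_pos _).le]
    congr 1
    have hee : Real.exp (-(mu j0 * t)) * Real.exp (E j0 * mu j0 * t)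
        = Real.exp (-(mu j0 * t * (1 - Real.exp (-(((j0 : ℕ) + 1 : ℝ) * L))))) := by
      rw [← Real.exp_add]
      congr 1
      rw [hE]
      ring
    calc ((j0 : ℕ) + 1 : ℝ) ^ ρ / (Nat.factorial ρ) * Real.exp (-(mu j0 * t)) *
          (Real.exp (E j0 * mu j0 * t) * bellPoly ρ (E j0 * mu j0 * t))
        = ((j0 : ℕ) + 1 : ℝ) ^ ρ / (Nat.factorial ρ) *
            (Real.exp (-(mu j0 * t)) * Real.exp (E j0 * mu j0 * t)) *
            bellPoly ρ (E j0 * mu j0 * t) := by ring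
      _ = F j0 ρ := by rw [hee, hF]
  -- expand gcpPmf inside the series
  have h1 : ∀ s : ℕ,
      ENNReal.ofReal ((s : ℝ) ^ z * Real.exp (-(L * s))) * ENNReal.ofReal (gcpPmf k0 mu s t)
        = ∑' y : Fin k0 → ℕ,
            if (∑ j0 : Fin k0, ((j0 : ℕ) + 1) * y j0) = s then
              ENNReal.ofReal ((s : ℝ) ^ z * Real.exp (-(L * s))) *
                ∏ j0 : Fin k0, ENNReal.ofReal
                  ((mu j0 * t) ^ (y j0) / (Nat.factorial (y j0)) * Real.exp (-(mu j0 * t)))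
            else 0 := by
    intro s
    rw [ofReal_gcpPmf mu hmu' s t ht, ← ENNReal.tsum_mul_left]
    exact tsum_congr fun y => by rw [mul_ite, mul_zero]
  rw [tsum_congr h1, ENNReal.tsum_comm]
  -- collapse the s-sum via the constraint
  have h2 : ∀ y : Fin k0 → ℕ,
      (∑' s : ℕ,
        if (∑ j0 : Fin k0, ((j0 : ℕ) + 1) * y j0) = s then
          ENNReal.ofReal ((s : ℝ) ^ z * Real.exp (-(L * s))) *
            ∏ j0 : Fin k0, ENNReal.ofReal
              ((mu j0 * t) ^ (y j0) / (Nat.factorial (y j0)) * Real.exp (-(mu j0 * t)))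
        else 0)
        = ∑ r ∈ Finset.piAntidiag Finset.univ z,
            ENNReal.ofReal ((Nat.factorial z : ℝ)) * ∏ j0 : Fin k0, ENNReal.ofReal (h j0 (r j0) (y j0)) := by
    intro y
    rw [tsum_eq_single (∑ j0 : Fin k0, ((j0 : ℕ) + 1) * y j0)
      (fun b hb => by rw [if_neg (fun hc => hb hc.symm)]), if_pos rfl]
    rw [← ENNReal.ofReal_prod_of_nonneg (fun j0 _ => by have := hmu' j0; positivity),
      ← ENNReal.ofReal_mul (by positivity)]
    rw [step_c k0 mu t L z y]
    rw [ENNReal.ofReal_sum_of_nonneg (fun r _ => by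
      exact mul_nonneg (Nat.cast_nonneg _) (Finset.prod_nonneg (fun j0 _ => hhnn j0 (r j0) (y j0))))]
    apply Finset.sum_congr rfl
    intro r _
    rw [ENNReal.ofReal_mul (Nat.cast_nonneg _),
      ENNReal.ofReal_prod_of_nonneg (fun j0 _ => hhnn j0 (r j0) (y j0))]
  rw [tsum_congr h2, Summable.tsum_finsetSum (fun r _ => ENNReal.summable)]
  -- factor the y-sum as a product of single sums
  have h3 : ∀ r : Fin k0 → ℕ,
      (∑' y : Fin k0 → ℕ,
        ENNReal.ofReal ((Nat.factorial z : ℝ)) * ∏ j0 : Fin k0, ENNReal.ofReal (h j0 (r j0) (y j0)))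
      = ENNReal.ofReal ((Nat.factorial z : ℝ) * ∏ j0 : Fin k0, F j0 (r j0)) := by
    intro r
    rw [ENNReal.tsum_mul_left,
      ennreal_tsum_pi_prod k0 (fun j0 m => ENNReal.ofReal (h j0 (r j0) m))]
    rw [Finset.prod_congr rfl (fun j0 _ => hsingle j0 (r j0))]
    rw [← ENNReal.ofReal_prod_of_nonneg (fun j0 _ => hFnn j0 (r j0)),
      ← ENNReal.ofReal_mul (Nat.cast_nonneg _)]
  rw [Finset.sum_congr rfl (fun r _ => h3 r)]
  -- identify with the right-hand side
  have h4 : (∑' r : Fin k0 → ℕ,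
      if (∑ j0 : Fin k0, r j0) = z then (Nat.factorial z : ℝ) * ∏ j0 : Fin k0, F j0 (r j0) else 0)
      = ∑ r ∈ Finset.piAntidiag Finset.univ z, (Nat.factorial z : ℝ) * ∏ j0 : Fin k0, F j0 (r j0) := by
    rw [tsum_eq_sum (s := Finset.piAntidiag Finset.univ z) (fun r hr => by
      rw [if_neg]
      intro hc
      exact hr (Finset.mem_piAntidiag.2 ⟨hc, fun i _ => Finset.mem_univ i⟩))]
    exact Finset.sum_congr rfl (fun r hr => if_pos (Finset.mem_piAntidiag.1 hr).1)
  rw [show (fun r : Fin k0 → ℕ =>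
      if (∑ j0 : Fin k0, r j0) = z then
        (Nat.factorial z : ℝ) *
          ∏ j0 : Fin k0,
            (((j0 : ℕ) + 1 : ℝ) ^ (r j0) / (Nat.factorial (r j0))) *
              Real.exp (-(mu j0 * t * (1 - Real.exp (-(((j0 : ℕ) + 1 : ℝ) * L))))) *
              bellPoly (r j0)
                (Real.exp (-(((j0 : ℕ) + 1 : ℝ) * L)) * mu j0 * t)
      else 0) = (fun r : Fin k0 → ℕ =>
      if (∑ j0 : Fin k0, r j0) = z then (Nat.factorial z : ℝ) * ∏ j0 : Fin k0, F j0 (r j0) else 0)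
    from rfl]
  rw [h4]
  rw [ENNReal.ofReal_sum_of_nonneg (fun r _ =>
    mul_nonneg (Nat.cast_nonneg _) (Finset.prod_nonneg (fun j0 _ => hFnn j0 (r j0))))]

end Aux

/-- state probabilities of the IGCP in terms of Bell polynomials. -/
theorem igcp_pmf_bell (k : ℕ) (hk : 0 < k) (lam : Fin k → ℝ) (hlam : ∀ j, 0 < lam j)
    (k0 : ℕ) (hk0 : 0 < k0) (mu : Fin k0 → ℝ) (hmu : ∀ j0, 0 < mu j0)
    (n : ℕ) (t : ℝ) (ht : 0 ≤ t) :
    igcpPmf k lam k0 mu n t =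
      ∑' nv : Fin k → ℕ,
        if (∑ j : Fin k, ((j : ℕ) + 1) * nv j) = n then
          (∏ j : Fin k, lam j ^ (nv j) / (Nat.factorial (nv j))) *
            ∑' r : Fin k0 → ℕ,
              if (∑ j0 : Fin k0, r j0) = (∑ j : Fin k, nv j) then
                (Nat.factorial (∑ j : Fin k, nv j) : ℝ) *
                  ∏ j0 : Fin k0,
                    (((j0 : ℕ) + 1 : ℝ) ^ (r j0) / (Nat.factorial (r j0))) *
                      Real.exp (-(mu j0 * t *
                        (1 - Real.exp (-(((j0 : ℕ) + 1 : ℝ) * ∑ j : Fin k, lam j))))) *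
                      bellPoly (r j0)
                        (Real.exp (-(((j0 : ℕ) + 1 : ℝ) * ∑ j : Fin k, lam j)) * mu j0 * t)
              else 0
        else 0 := by
  classical
  set L : ℝ := ∑ j : Fin k, lam j with hL
  have hLnn : 0 ≤ L := Finset.sum_nonneg (fun j _ => (hlam j).le)
  have hlam' : ∀ j, (0:ℝ) ≤ lam j := fun j => (hlam j).le
  set c : (Fin k → ℕ) → ℝ := fun x => ∏ j : Fin k, lam j ^ (x j) / (Nat.factorial (x j)) with hc
  have hcnn : ∀ x, 0 ≤ c x := fun x =>
    Finset.prod_nonneg (fun j _ => by have := hlam' j; positivity)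
  -- the inner (r-)series of the right-hand side
  set G : ℕ → ℝ := fun z =>
    ∑' r : Fin k0 → ℕ,
      if (∑ j0 : Fin k0, r j0) = z then
        (Nat.factorial z : ℝ) *
          ∏ j0 : Fin k0,
            (((j0 : ℕ) + 1 : ℝ) ^ (r j0) / (Nat.factorial (r j0))) *
              Real.exp (-(mu j0 * t * (1 - Real.exp (-(((j0 : ℕ) + 1 : ℝ) * L))))) *
              bellPoly (r j0) (Real.exp (-(((j0 : ℕ) + 1 : ℝ) * L)) * mu j0 * t)
      else 0 with hG
  have hGnn : ∀ z, 0 ≤ G z := by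
    intro z
    apply tsum_nonneg
    intro r
    split
    · apply mul_nonneg (Nat.cast_nonneg _)
      apply Finset.prod_nonneg
      intro j0 _
      have h2 := (hmu j0).le
      have hb : 0 ≤ bellPoly (r j0) (Real.exp (-(((j0 : ℕ) + 1 : ℝ) * L)) * mu j0 * t) :=
        bellPoly_nonneg _ _ (by positivity)
      positivity
    · exact le_refl 0
  -- nonnegativity of the summands
  have hA : ∀ s : ℕ, 0 ≤ gcpPmf k lam n s := fun s =>
    gcpPmf_nonneg lam hlam' n s (Nat.cast_nonneg s)
  have hB : ∀ s : ℕ, 0 ≤ gcpPmf k0 mu s t := fun s =>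
    gcpPmf_nonneg mu (fun j0 => (hmu j0).le) s t ht
  -- expand the first factor
  have hAx : ∀ s : ℕ, ENNReal.ofReal (gcpPmf k lam n s)
      = ∑' x : Fin k → ℕ,
          if (∑ j : Fin k, ((j : ℕ) + 1) * x j) = n then
            ENNReal.ofReal (c x) * ENNReal.ofReal ((s : ℝ) ^ (∑ j : Fin k, x j) * Real.exp (-(L * s)))
          else 0 := by
    intro s
    rw [ofReal_gcpPmf lam hlam' n s (Nat.cast_nonneg s)]
    apply tsum_congr
    intro x
    split
    · rw [← ENNReal.ofReal_prod_of_nonneg (fun j _ => by have := hlam' j; positivity)]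
      rw [show (∏ j : Fin k, (lam j * (s:ℝ)) ^ (x j) / (Nat.factorial (x j)) * Real.exp (-(lam j * s)))
          = c x * ((s : ℝ) ^ (∑ j : Fin k, x j) * Real.exp (-(L * s))) from ?_]
      · rw [ENNReal.ofReal_mul (hcnn x)]
      · calc (∏ j : Fin k, (lam j * (s:ℝ)) ^ (x j) / (Nat.factorial (x j)) * Real.exp (-(lam j * s)))
            = (∏ j : Fin k, lam j ^ (x j) / (Nat.factorial (x j))) *
                (∏ j : Fin k, (s : ℝ) ^ (x j)) * (∏ j : Fin k, Real.exp (-(lam j * s))) := by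
              rw [← Finset.prod_mul_distrib, ← Finset.prod_mul_distrib]
              apply Finset.prod_congr rfl
              intro j _
              rw [mul_pow]
              ring
          _ = c x * ((s : ℝ) ^ (∑ j : Fin k, x j) * Real.exp (-(L * s))) := by
              rw [Finset.prod_pow_eq_pow_sum, ← Real.exp_sum, hc, hL]
              rw [show (∑ j : Fin k, -(lam j * (s:ℝ))) = -((∑ j : Fin k, lam j) * s) by
                rw [Finset.sum_mul]; simp]
              ring
    · rfl
  -- main computation in ℝ≥0∞
  unfold igcpPmf
  rw [tsum_eq_toReal_tsum_ofReal _ (fun s => mul_nonneg (hA s) (hB s))]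
  have key : (∑' s : ℕ, ENNReal.ofReal (gcpPmf k lam n s * gcpPmf k0 mu s t))
      = ∑' x : Fin k → ℕ,
          ENNReal.ofReal (if (∑ j : Fin k, ((j : ℕ) + 1) * x j) = n then c x * G (∑ j : Fin k, x j) else 0) := by
    calc ∑' s : ℕ, ENNReal.ofReal (gcpPmf k lam n s * gcpPmf k0 mu s t)
        = ∑' s : ℕ, ∑' x : Fin k → ℕ,
            (if (∑ j : Fin k, ((j : ℕ) + 1) * x j) = n then
              ENNReal.ofReal (c x) *
                (ENNReal.ofReal ((s : ℝ) ^ (∑ j : Fin k, x j) * Real.exp (-(L * s))) *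
                  ENNReal.ofReal (gcpPmf k0 mu s t))
            else 0) := by
          apply tsum_congr
          intro s
          rw [ENNReal.ofReal_mul (hA s), hAx s, ← ENNReal.tsum_mul_right]
          apply tsum_congr
          intro x
          rw [ite_mul, zero_mul, mul_assoc]
      _ = ∑' x : Fin k → ℕ, ∑' s : ℕ,
            (if (∑ j : Fin k, ((j : ℕ) + 1) * x j) = n then
              ENNReal.ofReal (c x) *
                (ENNReal.ofReal ((s : ℝ) ^ (∑ j : Fin k, x j) * Real.exp (-(L * s))) *
                  ENNReal.ofReal (gcpPmf k0 mu s t))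
            else 0) := ENNReal.tsum_comm
      _ = ∑' x : Fin k → ℕ,
          ENNReal.ofReal (if (∑ j : Fin k, ((j : ℕ) + 1) * x j) = n then c x * G (∑ j : Fin k, x j) else 0) := by
          apply tsum_congr
          intro x
          by_cases hx : (∑ j : Fin k, ((j : ℕ) + 1) * x j) = n
          · simp only [hx, if_true]
            rw [ENNReal.tsum_mul_left, W_eval k0 mu hmu t ht L hLnn (∑ j : Fin k, x j),
              ← ENNReal.ofReal_mul (hcnn x)]
          · simp only [hx, if_false]
            simp
  rw [key, ← tsum_eq_toReal_tsum_ofReal _ (fun x => by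
      split
      · exact mul_nonneg (hcnn x) (hGnn _)
      · exact le_refl 0)]
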